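/- arXiv:math/9612213 — 2 statements merged into one kernel-verified Lean document; each statement's English description precedes it below -/
import Mathlib

section
/- Defect form of the Cauchy–Schwarz inequality: if X_1,...,X_n are real numbers, m ≤ n is a positive integer, and the partial sum of the first m terms satisfies Σ_{k=1}^m X_k = (m/n)·Σ_{k=1}^n X_k + D for some real D, then Σ_{k=1}^n X_k^2 ≥ (1/n)·(Σ_{k=1}^n X_k)^2 + D^2·n/(m·(n−m)). -/
/-- Defect form of the Cauchy–Schwarz inequality. -/
theorem defect_cauchy_schwarz (n m : ℕ) (hm : 1 ≤ m) (hmn : m < n)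
    (X : ℕ → ℝ) (D : ℝ)
    (hD : ∑ k ∈ Finset.Icc 1 m, X k = ((m : ℝ) / n) * ∑ k ∈ Finset.Icc 1 n, X k + D) :
    ∑ k ∈ Finset.Icc 1 n, (X k) ^ 2 ≥
      (1 / (n : ℝ)) * (∑ k ∈ Finset.Icc 1 n, X k) ^ 2 +
        D ^ 2 * n / ((m : ℝ) * ((n : ℝ) - (m : ℝ))) := by
  have hIcc : ∀ k : ℕ, Finset.Icc 1 k = Finset.Ioc 0 k := by
    intro k; ext x; simp [Nat.lt_iff_add_one_le]
  have hmn' : m ≤ n := hmn.le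
  have hsplit : ∀ f : ℕ → ℝ,
      ∑ k ∈ Finset.Ioc 0 m, f k + ∑ k ∈ Finset.Ioc m n, f k
        = ∑ k ∈ Finset.Ioc 0 n, f k := fun f =>
    Finset.sum_Ioc_consecutive f (Nat.zero_le m) hmn'
  set A := ∑ k ∈ Finset.Icc 1 m, X k with hA
  set S := ∑ k ∈ Finset.Icc 1 n, X k with hS
  set B := ∑ k ∈ Finset.Ioc m n, X k with hB
  have hAB : A + B = S := by
    rw [hA, hS, hIcc, hIcc]; exact hsplit X
  have hQ : ∑ k ∈ Finset.Icc 1 n, (X k) ^ 2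
      = ∑ k ∈ Finset.Icc 1 m, (X k) ^ 2 + ∑ k ∈ Finset.Ioc m n, (X k) ^ 2 := by
    rw [hIcc, hIcc]; exact (hsplit fun k => (X k) ^ 2).symm
  have cs1 : A ^ 2 ≤ m * ∑ k ∈ Finset.Icc 1 m, (X k) ^ 2 := by
    have := sq_sum_le_card_mul_sum_sq (s := Finset.Icc 1 m) (f := X)
    simpa [Nat.card_Icc] using this
  have cs2 : B ^ 2 ≤ ((n : ℝ) - m) * ∑ k ∈ Finset.Ioc m n, (X k) ^ 2 := by
    have := sq_sum_le_card_mul_sum_sq (s := Finset.Ioc m n) (f := X)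
    simpa [Nat.card_Ioc, Nat.cast_sub hmn'] using this
  have hm1 : (1 : ℝ) ≤ m := by exact_mod_cast hm
  have hmnR : (m : ℝ) < n := by exact_mod_cast hmn
  have hnpos : (0 : ℝ) < n := by linarith
  have hmpos : (0 : ℝ) < m := by linarith
  have hnm : (0 : ℝ) < (n : ℝ) - m := by linarith
  -- from hD : A = (m/n) * S + D, so n * A = m * S + n * D
  have hnA : (n : ℝ) * A = m * S + n * D := by
    rw [hD]; field_simp
  have hrhs : (1 / (n:ℝ)) * S ^ 2 + D ^ 2 * n / ((m:ℝ) * ((n:ℝ) - m))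
      = ((m:ℝ) * ((n:ℝ) - m) * S ^ 2 + D ^ 2 * n * n) / ((n:ℝ) * (m * ((n:ℝ) - m))) := by
    field_simp
  rw [hQ, ge_iff_le, hrhs, div_le_iff₀ (by positivity)]
  have hBval : B = S - A := by linarith
  have hnB : (n : ℝ) * B = ((n:ℝ) - m) * S - n * D := by
    rw [hBval]; linarith [hnA]
  have hid : (n:ℝ)^2 * ((n:ℝ) * (((n:ℝ)-m)*A^2 + m*B^2))
      = (n:ℝ)^2 * ((m:ℝ)*((n:ℝ)-m)*S^2 + D^2*n*n) := by
    linear_combination ((n:ℝ)-m)*(n:ℝ)*((n:ℝ)*A + m*S + n*D) * hnA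
      + (n:ℝ)*m*((n:ℝ)*B + ((n:ℝ)-m)*S - n*D) * hnB
  have hid' : (n:ℝ) * (((n:ℝ)-m)*A^2 + m*B^2)
      = (m:ℝ)*((n:ℝ)-m)*S^2 + D^2*n*n :=
    mul_left_cancel₀ (pow_ne_zero 2 hnpos.ne') hid
  nlinarith [mul_le_mul_of_nonneg_left cs1 (le_of_lt (by positivity : (0:ℝ) < n * ((n:ℝ) - m))),
    mul_le_mul_of_nonneg_left cs2 (le_of_lt (by positivity : (0:ℝ) < n * m)), hid']
end

section
/- If every pair of unmatched vertices x ∈ Z(X), y ∈ Z(Y) of a matching in a bipartite graph admits at least c·N internally vertex-disjoint alternating paths of length 5, and |Z(X)| = |Z(Y)| = k with 5k < c·N, then one can select pairwise vertex-disjoint alternating paths of length 5 connecting all unmatched pairs, and hence the graph has a perfect matching. -/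
open Finset

/-- `p` is an `M₀`-alternating path of length 5 in `G`: its six vertices are distinct and
its edge pattern is (non-matching, matching, non-matching, matching, non-matching). -/
def AltPath5 {V : Type*} (G : SimpleGraph V) (M₀ : G.Subgraph) (p : Fin 6 → V) : Prop :=
  Function.Injective p ∧
  G.Adj (p 0) (p 1) ∧ ¬ M₀.Adj (p 0) (p 1) ∧
  M₀.Adj (p 1) (p 2) ∧
  G.Adj (p 2) (p 3) ∧ ¬ M₀.Adj (p 2) (p 3) ∧
  M₀.Adj (p 3) (p 4) ∧
  G.Adj (p 4) (p 5) ∧ ¬ M₀.Adj (p 4) (p 5)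

def pair6 : Fin 6 → Fin 6
  | 0 => 1
  | 1 => 0
  | 2 => 3
  | 3 => 2
  | 4 => 5
  | 5 => 4

/-- If every pair of unmatched vertices admits at least `c·N` internally vertex-disjoint
alternating paths of length 5, and the number `k` of unmatched pairs satisfies `5k < cN`,
then pairwise vertex-disjoint alternating paths joining all unmatched pairs can be
selected, and hence the bipartite graph has a perfect matching. -/
theorem many_alternating_paths_perfect_matching {V : Type*} [Fintype V] [DecidableEq V]
    (G : SimpleGraph V) (X Y : Finset V) (M : ℕ)
    (hX : X.card = M) (hY : Y.card = M)
    (hpart : ∀ v : V, v ∈ X ∨ v ∈ Y) (hdisj : Disjoint X Y)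
    (hbip : ∀ u v : V, G.Adj u v → ¬(u ∈ X ∧ v ∈ X) ∧ ¬(u ∈ Y ∧ v ∈ Y))
    (M₀ : G.Subgraph) (hmatch : M₀.IsMatching)
    (k : ℕ) (zx zy : Fin k → V)
    (hzxinj : Function.Injective zx) (hzyinj : Function.Injective zy)
    (hzxmem : ∀ i, zx i ∈ X ∧ zx i ∉ M₀.verts)
    (hzymem : ∀ i, zy i ∈ Y ∧ zy i ∉ M₀.verts)
    (hzxall : ∀ v ∈ X, v ∉ M₀.verts → ∃ i, zx i = v)
    (hzyall : ∀ v ∈ Y, v ∉ M₀.verts → ∃ i, zy i = v)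
    (c : ℝ) (hc : 0 < c) (N : ℕ) (hN : 0 < N)
    (Fam : Fin k → Fin k → Finset (Fin 6 → V))
    (hcard : ∀ i j, c * (N : ℝ) ≤ ((Fam i j).card : ℝ))
    (hmem : ∀ i j, ∀ p ∈ Fam i j, AltPath5 G M₀ p ∧ p 0 = zx i ∧ p 5 = zy j)
    (hintdisj : ∀ i j, ∀ p ∈ Fam i j, ∀ q ∈ Fam i j, p ≠ q →
      ∀ a b : Fin 6, a ≠ 0 → a ≠ 5 → b ≠ 0 → b ≠ 5 → p a ≠ q b)
    (hk : (5 * k : ℝ) < c * (N : ℝ)) :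
    (∃ P : Fin k → Fin 6 → V, (∀ i, P i ∈ Fam i i) ∧
      ∀ i j, i ≠ j → ∀ a b : Fin 6, P i a ≠ P j b) ∧
    ∃ M' : G.Subgraph, M'.IsPerfectMatching := by
  classical
  have alt : ∀ i (p : Fin 6 → V), p ∈ Fam i i → AltPath5 G M₀ p :=
    fun i p hp => (hmem i i p hp).1
  have hp0 : ∀ i (p : Fin 6 → V), p ∈ Fam i i → p 0 = zx i :=
    fun i p hp => (hmem i i p hp).2.1
  have hp5 : ∀ i (p : Fin 6 → V), p ∈ Fam i i → p 5 = zy i :=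
    fun i p hp => (hmem i i p hp).2.2
  have hvert : ∀ i (p : Fin 6 → V), p ∈ Fam i i → ∀ a : Fin 6, a ≠ 0 → a ≠ 5 →
      p a ∈ M₀.verts := by
    intro i p hp a h0 h5
    obtain ⟨hinj, h01, hn01, h12, h23, hn23, h34, h45, hn45⟩ := alt i p hp
    fin_cases a
    · exact absurd rfl h0
    · exact M₀.edge_vert h12
    · exact M₀.edge_vert h12.symm
    · exact M₀.edge_vert h34
    · exact M₀.edge_vert h34.symm
    · exact absurd rfl h5
  -- vertices of paths for distinct unmatched pairs can only clash at internal positions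
  have hclash : ∀ i j : Fin k, i ≠ j → ∀ p ∈ Fam i i, ∀ q ∈ Fam j j, ∀ a b : Fin 6,
      p a = q b → a ≠ 0 ∧ a ≠ 5 ∧ b ≠ 0 ∧ b ≠ 5 := by
    intro i j hij p hp q hq a b hab
    refine ⟨?_, ?_, ?_, ?_⟩
    · rintro rfl
      rw [hp0 i p hp] at hab
      by_cases hb0 : b = 0
      · rw [hb0, hp0 j q hq] at hab; exact hij (hzxinj hab)
      · by_cases hb5 : b = 5
        · rw [hb5, hp5 j q hq] at hab
          refine (Finset.disjoint_left.mp hdisj (hzxmem i).1) ?_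
          rw [hab]; exact (hzymem j).1
        · refine (hzxmem i).2 ?_
          rw [hab]; exact hvert j q hq b hb0 hb5
    · rintro rfl
      rw [hp5 i p hp] at hab
      by_cases hb0 : b = 0
      · rw [hb0, hp0 j q hq] at hab
        refine (Finset.disjoint_right.mp hdisj (hzymem i).1) ?_
        rw [hab]; exact (hzxmem j).1
      · by_cases hb5 : b = 5
        · rw [hb5, hp5 j q hq] at hab; exact hij (hzyinj hab)
        · refine (hzymem i).2 ?_
          rw [hab]; exact hvert j q hq b hb0 hb5
    · rintro rfl
      rw [hp0 j q hq] at hab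
      by_cases ha0 : a = 0
      · rw [ha0, hp0 i p hp] at hab; exact hij (hzxinj hab)
      · by_cases ha5 : a = 5
        · rw [ha5, hp5 i p hp] at hab
          refine (Finset.disjoint_right.mp hdisj (hzymem i).1) ?_
          rw [hab]; exact (hzxmem j).1
        · refine (hzxmem j).2 ?_
          rw [← hab]; exact hvert i p hp a ha0 ha5
    · rintro rfl
      rw [hp5 j q hq] at hab
      by_cases ha0 : a = 0
      · rw [ha0, hp0 i p hp] at hab
        refine (Finset.disjoint_left.mp hdisj (hzxmem i).1) ?_
        rw [hab]; exact (hzymem j).1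
      · by_cases ha5 : a = 5
        · rw [ha5, hp5 i p hp] at hab; exact hij (hzyinj hab)
        · refine (hzymem j).2 ?_
          rw [← hab]; exact hvert i p hp a ha0 ha5
  -- greedy selection
  have key : ∀ m : ℕ, ∃ P : Fin k → Fin 6 → V, ∀ i : Fin k, (i : ℕ) < m →
      P i ∈ Fam i i ∧ ∀ j : Fin k, (j : ℕ) < (i : ℕ) → ∀ a b : Fin 6, P i a ≠ P j b := by
    intro m
    induction m with
    | zero => exact ⟨fun i _ => zx i, fun i hi => absurd hi (Nat.not_lt_zero _)⟩
    | succ m ih =>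
      obtain ⟨P, hP⟩ := ih
      by_cases hm : m < k
      · have hk1 : 0 < k := by omega
        set i₀ : Fin k := ⟨m, hm⟩ with hi₀def
        set B : Finset (Fin 6 → V) := (Fam i₀ i₀).filter
          (fun p => ∃ j : Fin k, (j : ℕ) < m ∧ ∃ a b : Fin 6, p a = P j b) with hBdef
        have hSj : ∀ j : Fin k, (j : ℕ) < m →
            ((Fam i₀ i₀).filter (fun p => ∃ a b : Fin 6, p a = P j b)).card ≤ 4 := by
          intro j hj
          have hji : i₀ ≠ j := by
            intro h; rw [← h] at hj; exact lt_irrefl m hj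
          have hPj : P j ∈ Fam j j := (hP j hj).1
          have hsub : (Fam i₀ i₀).filter (fun p => ∃ a b : Fin 6, p a = P j b) ⊆
              ({1, 2, 3, 4} : Finset (Fin 6)).biUnion
                (fun b => (Fam i₀ i₀).filter (fun p => ∃ a : Fin 6, p a = P j b)) := by
            intro p hp
            rw [Finset.mem_filter] at hp
            obtain ⟨hpF, a, b, hab⟩ := hp
            obtain ⟨-, -, hb0, hb5⟩ := hclash i₀ j hji p hpF (P j) hPj a b hab
            rw [Finset.mem_biUnion]
            refine ⟨b, ?_, ?_⟩
            · have : ∀ b : Fin 6, b ≠ 0 → b ≠ 5 → b ∈ ({1, 2, 3, 4} : Finset (Fin 6)) := by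
                decide
              exact this b hb0 hb5
            · rw [Finset.mem_filter]; exact ⟨hpF, a, hab⟩
          calc ((Fam i₀ i₀).filter (fun p => ∃ a b : Fin 6, p a = P j b)).card
              ≤ (({1, 2, 3, 4} : Finset (Fin 6)).biUnion
                (fun b => (Fam i₀ i₀).filter (fun p => ∃ a : Fin 6, p a = P j b))).card :=
                Finset.card_le_card hsub
            _ ≤ ∑ b ∈ ({1, 2, 3, 4} : Finset (Fin 6)),
                ((Fam i₀ i₀).filter (fun p => ∃ a : Fin 6, p a = P j b)).card :=
                Finset.card_biUnion_le
            _ ≤ ∑ _b ∈ ({1, 2, 3, 4} : Finset (Fin 6)), 1 := by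
                refine Finset.sum_le_sum ?_
                intro b hb
                refine Finset.card_le_one.mpr ?_
                intro p hp q hq
                rw [Finset.mem_filter] at hp hq
                obtain ⟨hpF, a, ha⟩ := hp
                obtain ⟨hqF, a', ha'⟩ := hq
                obtain ⟨ha0, ha5, -, -⟩ := hclash i₀ j hji p hpF (P j) hPj a b ha
                obtain ⟨ha0', ha5', -, -⟩ := hclash i₀ j hji q hqF (P j) hPj a' b ha'
                by_contra hpq
                exact hintdisj i₀ i₀ p hpF q hqF hpq a a' ha0 ha5 ha0' ha5'
                  (ha.trans ha'.symm)
            _ ≤ 4 := by simp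
        have hBsub : B ⊆ (Finset.univ.filter (fun j : Fin k => (j : ℕ) < m)).biUnion
            (fun j => (Fam i₀ i₀).filter (fun p => ∃ a b : Fin 6, p a = P j b)) := by
          intro p hp
          rw [hBdef, Finset.mem_filter] at hp
          obtain ⟨hpF, j, hj, a, b, hab⟩ := hp
          rw [Finset.mem_biUnion]
          exact ⟨j, by simp [hj], by rw [Finset.mem_filter]; exact ⟨hpF, a, b, hab⟩⟩
        have hBcard : B.card ≤ 4 * k := by
          calc B.card ≤ ∑ j ∈ Finset.univ.filter (fun j : Fin k => (j : ℕ) < m),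
              ((Fam i₀ i₀).filter (fun p => ∃ a b : Fin 6, p a = P j b)).card :=
              (Finset.card_le_card hBsub).trans Finset.card_biUnion_le
            _ ≤ ∑ j ∈ Finset.univ.filter (fun j : Fin k => (j : ℕ) < m), 4 := by
              refine Finset.sum_le_sum ?_
              intro j hj
              rw [Finset.mem_filter] at hj
              exact hSj j hj.2
            _ = 4 * (Finset.univ.filter (fun j : Fin k => (j : ℕ) < m)).card := by
              rw [Finset.sum_const, smul_eq_mul, mul_comm]
            _ ≤ 4 * k := by
              have := (Finset.card_filter_le Finset.univ (fun j : Fin k => (j : ℕ) < m))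
              simpa using Nat.mul_le_mul_left 4 (this.trans (by simp))
        have hBlt : (B.card : ℝ) < ((Fam i₀ i₀).card : ℝ) := by
          have h1 : (B.card : ℝ) ≤ 4 * k := by exact_mod_cast hBcard
          have h2 : (4 * k : ℝ) < 5 * k := by
            have : (0 : ℝ) < k := by exact_mod_cast hk1
            nlinarith
          linarith [hcard i₀ i₀]
        have hex : ∃ p₀, p₀ ∈ Fam i₀ i₀ ∧ p₀ ∉ B := by
          by_contra h
          push_neg at h
          have hsub : Fam i₀ i₀ ⊆ B := fun p hp => h p hp
          have := Finset.card_le_card hsub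
          have : ((Fam i₀ i₀).card : ℝ) ≤ (B.card : ℝ) := by exact_mod_cast this
          linarith
        obtain ⟨p₀, hp₀F, hp₀B⟩ := hex
        refine ⟨Function.update P i₀ p₀, ?_⟩
        intro i hi
        by_cases hii : i = i₀
        · subst hii
          rw [Function.update_self]
          refine ⟨hp₀F, ?_⟩
          intro j hj a b
          have hjne : j ≠ i₀ := by
            intro h; rw [h] at hj; exact lt_irrefl _ hj
          rw [Function.update_of_ne hjne]
          intro hcon
          apply hp₀B
          rw [hBdef, Finset.mem_filter]
          exact ⟨hp₀F, j, hj, a, b, hcon⟩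
        · have hi' : (i : ℕ) < m := by
            have : (i : ℕ) ≠ m := by
              intro h; apply hii; apply Fin.ext; simp [h, hi₀def]
            omega
          rw [Function.update_of_ne hii]
          refine ⟨(hP i hi').1, ?_⟩
          intro j hj a b
          have hjne : j ≠ i₀ := by
            intro h
            rw [h] at hj
            have : (i : ℕ) < m := hi'
            simp [hi₀def] at hj
            omega
          rw [Function.update_of_ne hjne]
          exact (hP i hi').2 j hj a b
      · refine ⟨P, ?_⟩
        intro i hi
        exact hP i (lt_of_lt_of_le i.isLt (Nat.le_of_not_lt hm))
  obtain ⟨P, hPkey⟩ := key k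
  have hPmem : ∀ i, P i ∈ Fam i i := fun i => (hPkey i i.isLt).1
  have hPdisj : ∀ i j, i ≠ j → ∀ a b : Fin 6, P i a ≠ P j b := by
    intro i j hij a b
    rcases Nat.lt_or_ge (i : ℕ) (j : ℕ) with h | h
    · exact fun he => (hPkey j j.isLt).2 i h b a he.symm
    · have h' : (j : ℕ) < (i : ℕ) := by
        rcases Nat.lt_or_ge (j : ℕ) (i : ℕ) with h2 | h2
        · exact h2
        · exact absurd (Fin.ext (Nat.le_antisymm h h2)) (Ne.symm hij)
      exact (hPkey i i.isLt).2 j h' a b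
  refine ⟨⟨P, hPmem, hPdisj⟩, ?_⟩
  -- part 2: construct the perfect matching
  have altP : ∀ i, AltPath5 G M₀ (P i) := fun i => alt i (P i) (hPmem i)
  have hPinj : ∀ i, Function.Injective (P i) := fun i => (altP i).1
  have hpos : ∀ i j (a b : Fin 6), P i a = P j b → i = j ∧ a = b := by
    intro i j a b h
    by_cases hij : i = j
    · subst hij; exact ⟨rfl, hPinj i h⟩
    · exact absurd h (hPdisj i j hij a b)
  set rel : V → V → Prop := fun u v =>
    (∃ i, (u = P i 0 ∧ v = P i 1) ∨ (u = P i 1 ∧ v = P i 0) ∨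
      (u = P i 2 ∧ v = P i 3) ∨ (u = P i 3 ∧ v = P i 2) ∨
      (u = P i 4 ∧ v = P i 5) ∨ (u = P i 5 ∧ v = P i 4)) ∨
    (M₀.Adj u v ∧ (∀ i a, u ≠ P i a) ∧ (∀ i a, v ≠ P i a)) with hreldef
  have relsub : ∀ u v, rel u v → G.Adj u v := by
    intro u v h
    rcases h with ⟨i, h⟩ | ⟨h, -, -⟩
    · obtain ⟨hinj, h01, hn01, h12, h23, hn23, h34, h45, hn45⟩ := altP i
      rcases h with ⟨rfl, rfl⟩|⟨rfl, rfl⟩|⟨rfl, rfl⟩|⟨rfl, rfl⟩|⟨rfl, rfl⟩|⟨rfl, rfl⟩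
      · exact h01
      · exact h01.symm
      · exact h23
      · exact h23.symm
      · exact h45
      · exact h45.symm
    · exact M₀.adj_sub h
  have relsymm : ∀ u v, rel u v → rel v u := by
    intro u v h
    rcases h with ⟨i, h⟩ | ⟨h, hu, hv⟩
    · exact Or.inl ⟨i, by tauto⟩
    · exact Or.inr ⟨h.symm, hv, hu⟩
  refine ⟨⟨Set.univ, rel, fun {u v} h => relsub u v h, fun {u v} _ => Set.mem_univ u,
    ⟨fun u v h => relsymm u v h⟩⟩, ?_, fun v => Set.mem_univ v⟩
  intro v hv
  by_cases hvp : ∃ i a, v = P i a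
  · obtain ⟨i, a, rfl⟩ := hvp
    refine ⟨P i (pair6 a), ?_, ?_⟩
    · refine Or.inl ⟨i, ?_⟩
      fin_cases a <;> simp [pair6]
    · intro u hu
      rcases hu with ⟨j, h⟩ | ⟨-, hnp, -⟩
      · rcases h with ⟨h1, h2⟩|⟨h1, h2⟩|⟨h1, h2⟩|⟨h1, h2⟩|⟨h1, h2⟩|⟨h1, h2⟩ <;>
        · obtain ⟨rfl, rfl⟩ := hpos _ _ _ _ h1
          simp [pair6, h2]
      · exact absurd rfl (hnp i a)
  · push_neg at hvp
    have hvM : v ∈ M₀.verts := by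
      by_contra hvM
      rcases hpart v with hvX | hvY
      · obtain ⟨i, hi⟩ := hzxall v hvX hvM
        exact hvp i 0 (by rw [← hi, ← hp0 i (P i) (hPmem i)])
      · obtain ⟨i, hi⟩ := hzyall v hvY hvM
        exact hvp i 5 (by rw [← hi, ← hp5 i (P i) (hPmem i)])
    obtain ⟨w, hw, hwuniq⟩ := hmatch hvM
    have hwp : ∀ i a, w ≠ P i a := by
      intro i a hwa
      have hwM : w ∈ M₀.verts := M₀.edge_vert hw.symm
      obtain ⟨hinj, h01, hn01, h12, h23, hn23, h34, h45, hn45⟩ := altP i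
      subst hwa
      obtain ⟨u, hu, huniq⟩ := hmatch hwM
      fin_cases a
      · refine (hzxmem i).2 ?_
        rw [← hp0 i (P i) (hPmem i)]; exact hwM
      · exact hvp i 2 ((huniq v hw.symm).trans (huniq _ h12).symm)
      · exact hvp i 1 ((huniq v hw.symm).trans (huniq _ h12.symm).symm)
      · exact hvp i 4 ((huniq v hw.symm).trans (huniq _ h34).symm)
      · exact hvp i 3 ((huniq v hw.symm).trans (huniq _ h34.symm).symm)
      · refine (hzymem i).2 ?_
        rw [← hp5 i (P i) (hPmem i)]; exact hwM
    refine ⟨w, Or.inr ⟨hw, hvp, hwp⟩, ?_⟩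
    intro u hu
    rcases hu with ⟨j, h⟩ | ⟨h, -, -⟩
    · rcases h with ⟨h1, -⟩|⟨h1, -⟩|⟨h1, -⟩|⟨h1, -⟩|⟨h1, -⟩|⟨h1, -⟩ <;>
        exact absurd h1 (hvp _ _)
    · exact hwuniq u h
end
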